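/- arXiv:2209.02823 — 2 statements merged into one kernel-verified Lean document; each statement's English description precedes it below -/
import Mathlib

section
/- Let n ≥ 2 and μ be a finite nonnegative Radon measure on the open ball B₂ of radius 2 in ℝⁿ. Then there exists a point p on the unit sphere S^{n-1} and a dimensional constant c(n) such that μ(B_r(p) ∩ B₂) ≤ c(n) μ(B₂) r^{n-1} for all r > 0. -/
open MeasureTheory Metric Set


lemma stmt0_sector_bound {n : ℕ} (hn : 1 ≤ n) (q : EuclideanSpace ℝ (Fin n)) (hq : ‖q‖ = 1)
    {ρ : ℝ} (hρ0 : 0 < ρ) (hρ5 : ρ ≤ 5) :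
    volume ((closedBall (0 : EuclideanSpace ℝ (Fin n)) 1 \ ball 0 (1/2)) ∩
        (fun x : EuclideanSpace ℝ (Fin n) => ‖x‖⁻¹ • x) ⁻¹' closedBall q ρ)
      ≤ ENNReal.ofReal (11 * (2*ρ) ^ (n-1)) * volume (ball (0 : EuclideanSpace ℝ (Fin n)) 1) := by
  obtain ⟨m, rfl⟩ : ∃ m, n = m + 1 := ⟨n - 1, (Nat.succ_pred_eq_of_pos hn).symm⟩
  simp only [Nat.add_sub_cancel]
  set N : ℕ := ⌊(2*ρ)⁻¹⌋₊ with hN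
  have hsub : (closedBall (0 : EuclideanSpace ℝ (Fin (m+1))) 1 \ ball 0 (1/2)) ∩
      (fun x : EuclideanSpace ℝ (Fin (m+1)) => ‖x‖⁻¹ • x) ⁻¹' closedBall q ρ
      ⊆ ⋃ j ∈ Finset.range (N+1), closedBall (((1:ℝ)/2 + j * ρ) • q) (2*ρ) := by
    rintro x ⟨⟨hx1, hx2⟩, hx3⟩
    have hs1 : ‖x‖ ≤ 1 := mem_closedBall_zero_iff.mp hx1
    have hs2 : (1:ℝ)/2 ≤ ‖x‖ := by
      by_contra hlt
      exact hx2 (mem_ball_zero_iff.mpr (by linarith))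
    have hspos : (0:ℝ) < ‖x‖ := by linarith
    have hπ : ‖‖x‖⁻¹ • x - q‖ ≤ ρ := by
      rw [Set.mem_preimage, Metric.mem_closedBall, dist_eq_norm] at hx3
      exact hx3
    set j : ℕ := ⌊(‖x‖ - 1/2) / ρ⌋₊ with hj
    have hdivnn : (0:ℝ) ≤ (‖x‖ - 1/2) / ρ := div_nonneg (by linarith) hρ0.le
    have hjle : (j:ℝ) * ρ ≤ ‖x‖ - 1/2 := (le_div_iff₀ hρ0).mp (Nat.floor_le hdivnn)
    have hjgt : ‖x‖ - 1/2 < ((j:ℝ) + 1) * ρ :=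
      (div_lt_iff₀ hρ0).mp (Nat.lt_floor_add_one ((‖x‖ - 1/2)/ρ))
    have hjN : j ≤ N := by
      apply Nat.floor_le_floor
      rw [div_le_iff₀ hρ0]
      have h12 : (2*ρ)⁻¹ * ρ = 1/2 := by
        field_simp
      rw [h12]; linarith
    refine Set.mem_iUnion₂.mpr ⟨j, Finset.mem_range.mpr (Nat.lt_succ_of_le hjN), ?_⟩
    · rw [mem_closedBall]
      have h1 : dist x (‖x‖ • q) ≤ ρ := by
        have heq : x - ‖x‖ • q = ‖x‖ • (‖x‖⁻¹ • x - q) := by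
          rw [smul_sub, smul_smul, mul_inv_cancel₀ hspos.ne', one_smul]
        rw [dist_eq_norm, heq, norm_smul, Real.norm_of_nonneg hspos.le]
        nlinarith
      have h2 : dist (‖x‖ • q) (((1:ℝ)/2 + j * ρ) • q) ≤ ρ := by
        rw [dist_eq_norm, ← sub_smul, norm_smul, hq, mul_one, Real.norm_eq_abs, abs_le]
        constructor <;> nlinarith
      calc dist x (((1:ℝ)/2 + j * ρ) • q)
          ≤ dist x (‖x‖ • q) + dist (‖x‖ • q) (((1:ℝ)/2 + j * ρ) • q) := dist_triangle _ _ _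
        _ ≤ 2 * ρ := by linarith
  have hball : ∀ y : EuclideanSpace ℝ (Fin (m+1)),
      volume (closedBall y (2*ρ)) = ENNReal.ofReal ((2*ρ)^(m+1)) *
        volume (ball (0 : EuclideanSpace ℝ (Fin (m+1))) 1) := by
    intro y
    rw [Measure.addHaar_closedBall volume y (by positivity), finrank_euclideanSpace_fin]
  calc volume ((closedBall (0 : EuclideanSpace ℝ (Fin (m+1))) 1 \ ball 0 (1/2)) ∩
        (fun x : EuclideanSpace ℝ (Fin (m+1)) => ‖x‖⁻¹ • x) ⁻¹' closedBall q ρ)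
      ≤ volume (⋃ j ∈ Finset.range (N+1), closedBall (((1:ℝ)/2 + j * ρ) • q) (2*ρ)) :=
        measure_mono hsub
    _ ≤ ∑ j ∈ Finset.range (N+1), volume (closedBall (((1:ℝ)/2 + j * ρ) • q) (2*ρ)) :=
        MeasureTheory.measure_biUnion_finset_le _ _
    _ = (N+1) * (ENNReal.ofReal ((2*ρ)^(m+1)) *
          volume (ball (0 : EuclideanSpace ℝ (Fin (m+1))) 1)) := by
        simp only [hball, Finset.sum_const, Finset.card_range, nsmul_eq_mul]
        push_cast; ring
    _ ≤ ENNReal.ofReal (11 * (2*ρ)^m) * volume (ball (0 : EuclideanSpace ℝ (Fin (m+1))) 1) := by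
        rw [← mul_assoc]
        apply mul_le_mul_left
        have : ((N:ENNReal)+1) = ENNReal.ofReal ((N:ℝ)+1) := by
          rw [ENNReal.ofReal_add (by positivity) zero_le_one]
          simp
        rw [this, ← ENNReal.ofReal_mul (by positivity)]
        apply ENNReal.ofReal_le_ofReal
        have hNle : (N:ℝ) ≤ (2*ρ)⁻¹ := Nat.floor_le (by positivity)
        have hpm : (0:ℝ) < (2*ρ)^m := by positivity
        have hinv : (2*ρ)⁻¹ * (2*ρ) = 1 := by
          field_simp
        have hmul : (N:ℝ) * (2*ρ) ≤ (2*ρ)⁻¹ * (2*ρ) :=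
          mul_le_mul_of_nonneg_right hNle (by positivity)
        calc ((N:ℝ)+1) * (2*ρ)^(m+1) = (((N:ℝ)) * (2*ρ) + 2*ρ) * (2*ρ)^m := by ring
          _ ≤ (1 + 2*ρ) * (2*ρ)^m := by nlinarith
          _ ≤ 11 * (2*ρ)^m := by nlinarith

/-- Let `n ≥ 2` and `μ` be a finite nonnegative Radon measure on the open
ball `B₂` of radius `2` in `ℝⁿ`. Then there exist a dimensional constant `c = c(n) > 0` and a
point `p` on the unit sphere `S^{n-1}` such that
`μ(B_r(p) ∩ B₂) ≤ c · μ(B₂) · r^{n-1}` for all `r > 0`. -/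
theorem stmt0 (n : ℕ) (hn : 2 ≤ n) :
    ∃ c : ℝ, 0 < c ∧
      ∀ (μ : Measure (EuclideanSpace ℝ (Fin n))), IsFiniteMeasure μ →
        ∃ p : EuclideanSpace ℝ (Fin n), ‖p‖ = 1 ∧
          ∀ r : ℝ, 0 < r →
            μ (ball p r ∩ ball 0 2) ≤ ENNReal.ofReal (c * r ^ (n - 1)) * μ (ball 0 2) := by
  have hn1 : 1 ≤ n := le_trans one_le_two hn
  haveI : NeZero n := ⟨by omega⟩
  set c : ℝ := 1 + 11 * 10 ^ (n-1) * 8 ^ n with hc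
  have hcpos : 0 < c := by positivity
  have hc1 : 1 ≤ c := by
    have : (0:ℝ) < 11 * 10 ^ (n-1) * 8 ^ n := by positivity
    linarith
  refine ⟨c, hcpos, ?_⟩
  intro μ hμfin
  set p₀ : EuclideanSpace ℝ (Fin n) := EuclideanSpace.single (0 : Fin n) (1:ℝ) with hp₀
  have hp0 : ‖p₀‖ = 1 := by
    rw [hp₀, EuclideanSpace.norm_single]; norm_num
  by_cases h0 : μ (ball (0 : EuclideanSpace ℝ (Fin n)) 2) = 0
  · refine ⟨p₀, hp0, fun r hr => ?_⟩
    calc μ (ball p₀ r ∩ ball 0 2) ≤ μ (ball (0 : EuclideanSpace ℝ (Fin n)) 2) :=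
          measure_mono inter_subset_right
      _ = 0 := h0
      _ ≤ _ := zero_le
  · by_contra hcon
    push_neg at hcon
    -- from the negation, get for each sphere point a bad small radius
    have key : ∀ p : EuclideanSpace ℝ (Fin n), ∃ ρ : ℝ, 0 < ρ ∧ ρ < 1 ∧
        (‖p‖ = 1 → ENNReal.ofReal (c * ρ ^ (n-1)) * μ (ball (0 : EuclideanSpace ℝ (Fin n)) 2)
          < μ (ball p ρ ∩ ball 0 2)) := by
      intro p
      by_cases hp : ‖p‖ = 1
      · obtain ⟨ρ, hρpos, hbad⟩ := hcon p hp
        have hρ1 : ρ < 1 := by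
          by_contra hge
          push_neg at hge
          have h1le : (1:ℝ) ≤ c * ρ ^ (n-1) := by
            have : (1:ℝ) ≤ ρ ^ (n-1) := one_le_pow₀ hge
            nlinarith
          have : μ (ball p ρ ∩ ball 0 2)
              ≤ ENNReal.ofReal (c * ρ ^ (n-1)) * μ (ball (0:EuclideanSpace ℝ (Fin n)) 2) := by
            calc μ (ball p ρ ∩ ball 0 2) ≤ μ (ball (0:EuclideanSpace ℝ (Fin n)) 2) :=
                  measure_mono inter_subset_right
              _ = 1 * μ (ball (0:EuclideanSpace ℝ (Fin n)) 2) := (one_mul _).symm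
              _ ≤ _ := by
                  apply mul_le_mul_left
                  rw [show (1:ENNReal) = ENNReal.ofReal 1 by simp]
                  exact ENNReal.ofReal_le_ofReal h1le
          exact absurd this (not_le.mpr hbad)
        exact ⟨ρ, hρpos, hρ1, fun _ => hbad⟩
      · exact ⟨1/2, by norm_num, by norm_num, fun h => absurd h hp⟩
    choose r hr0 hr1 hrlt using key
    -- Vitali covering
    obtain ⟨u, hut, hdisj, hcov⟩ :=
      Vitali.exists_disjoint_subfamily_covering_enlargement_closedBall
        (sphere (0 : EuclideanSpace ℝ (Fin n)) 1) id r 1 (fun a _ => (hr1 a).le) 5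
        (by norm_num)
    have hnorm : ∀ a ∈ u, ‖a‖ = 1 := fun a ha => mem_sphere_zero_iff_norm.mp (hut ha)
    -- u is countable
    have hucnt : u.Countable := by
      have hpos : ∀ i : ↥u, 0 < μ (closedBall (i : EuclideanSpace ℝ (Fin n)) (r i)) := by
        intro i
        have hlt := hrlt i (hnorm i i.2)
        have h1 : (0:ENNReal) < ENNReal.ofReal (c * r (i : EuclideanSpace ℝ (Fin n)) ^ (n-1)) *
            μ (ball (0 : EuclideanSpace ℝ (Fin n)) 2) := by
          have hpos' : (0:ℝ) < c * r (i : EuclideanSpace ℝ (Fin n)) ^ (n-1) := by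
            have := hr0 (i : EuclideanSpace ℝ (Fin n)); positivity
          exact ENNReal.mul_pos (ENNReal.ofReal_pos.mpr hpos').ne' h0
        calc (0:ENNReal) < _ := h1
          _ < μ (ball (i : EuclideanSpace ℝ (Fin n)) (r i) ∩ ball 0 2) := hlt
          _ ≤ μ (closedBall (i : EuclideanSpace ℝ (Fin n)) (r i)) :=
              measure_mono (inter_subset_left.trans ball_subset_closedBall)
      have hdisj' : Pairwise (Function.onFun Disjoint fun i : ↥u =>
          closedBall (i : EuclideanSpace ℝ (Fin n)) (r i)) := by
        intro a b hab
        exact hdisj a.2 b.2 (Subtype.coe_injective.ne hab)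
      have hcnt := MeasureTheory.Measure.countable_meas_pos_of_disjoint_iUnion
        (μ := μ) (fun i : ↥u => measurableSet_closedBall) hdisj'
      have : {i : ↥u | 0 < μ (closedBall (i : EuclideanSpace ℝ (Fin n)) (r i))} = univ := by
        ext i; simpa using hpos i
      rw [this] at hcnt
      exact Set.countable_coe_iff.mp (Set.countable_univ_iff.mp hcnt)
    simp only [id_eq] at hdisj hcov
    set μB := μ (ball (0 : EuclideanSpace ℝ (Fin n)) 2) with hμB
    set T : ENNReal :=
      ∑' (a : ↥u), ENNReal.ofReal (r (a : EuclideanSpace ℝ (Fin n)) ^ (n-1)) with hT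
    have hsum1 : ∑' (a : ↥u), μ (closedBall (a : EuclideanSpace ℝ (Fin n))
        (r (a : EuclideanSpace ℝ (Fin n)))) ≤ μB := by
      rw [← measure_biUnion hucnt hdisj (fun a _ => measurableSet_closedBall)]
      apply measure_mono
      refine iUnion₂_subset fun a ha => ?_
      apply closedBall_subset_ball'
      rw [dist_zero_right, hnorm a ha]
      linarith [hr1 a]
    have hterm : ∀ a : ↥u, (ENNReal.ofReal c * μB) *
        ENNReal.ofReal (r (a : EuclideanSpace ℝ (Fin n)) ^ (n-1))
        ≤ μ (closedBall (a : EuclideanSpace ℝ (Fin n)) (r (a : EuclideanSpace ℝ (Fin n)))) := by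
      intro a
      have hlt := hrlt (a : EuclideanSpace ℝ (Fin n)) (hnorm a a.2)
      calc (ENNReal.ofReal c * μB) * ENNReal.ofReal (r (a : EuclideanSpace ℝ (Fin n)) ^ (n-1))
          = ENNReal.ofReal (c * r (a : EuclideanSpace ℝ (Fin n)) ^ (n-1)) * μB := by
            rw [ENNReal.ofReal_mul hcpos.le]; ring
        _ ≤ μ (ball (a : EuclideanSpace ℝ (Fin n)) (r (a : EuclideanSpace ℝ (Fin n)))
              ∩ ball 0 2) := hlt.le
        _ ≤ _ := measure_mono (inter_subset_left.trans ball_subset_closedBall)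
    have hcT : (ENNReal.ofReal c * μB) * T ≤ μB := by
      rw [hT, ← ENNReal.tsum_mul_left]
      exact (ENNReal.tsum_le_tsum hterm).trans hsum1
    have hμBtop : μB ≠ ⊤ := measure_ne_top μ _
    have hT_le : T ≤ (ENNReal.ofReal c)⁻¹ := by
      rw [ENNReal.le_inv_iff_mul_le]
      have h1 : (T * ENNReal.ofReal c) * μB ≤ 1 * μB := by
        rw [one_mul]
        calc (T * ENNReal.ofReal c) * μB = (ENNReal.ofReal c * μB) * T := by ring
          _ ≤ μB := hcT
      exact (ENNReal.mul_le_mul_iff_left h0 hμBtop).mp h1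
    set A := closedBall (0 : EuclideanSpace ℝ (Fin n)) 1 \ ball 0 (1/2) with hA
    set Vb := volume (ball (0 : EuclideanSpace ℝ (Fin n)) 1) with hVb
    set K := ENNReal.ofReal ((11:ℝ) * 10 ^ (n-1)) * Vb with hK
    have hAcov : A ⊆ ⋃ a ∈ u, (A ∩ (fun x : EuclideanSpace ℝ (Fin n) => ‖x‖⁻¹ • x) ⁻¹'
        closedBall a (5 * r a)) := by
      intro x hx
      have hx2 : (1:ℝ)/2 ≤ ‖x‖ := by
        by_contra hlt
        exact hx.2 (mem_ball_zero_iff.mpr (by linarith))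
      have hxpos : (0:ℝ) < ‖x‖ := by linarith
      have hπx : ‖(‖x‖⁻¹ • x : EuclideanSpace ℝ (Fin n))‖ = 1 := by
        rw [norm_smul, norm_inv, norm_norm, inv_mul_cancel₀ hxpos.ne']
      obtain ⟨a, hau, hsub⟩ := hcov (‖x‖⁻¹ • x) (mem_sphere_zero_iff_norm.mpr hπx)
      refine Set.mem_biUnion hau ⟨hx, Set.mem_preimage.mpr ?_⟩
      exact hsub (mem_closedBall_self (hr0 _).le)
    have hsec : ∀ a : ↥u, volume (A ∩ (fun x : EuclideanSpace ℝ (Fin n) => ‖x‖⁻¹ • x) ⁻¹'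
        closedBall (a : EuclideanSpace ℝ (Fin n)) (5 * r (a : EuclideanSpace ℝ (Fin n))))
        ≤ K * ENNReal.ofReal (r (a : EuclideanSpace ℝ (Fin n)) ^ (n-1)) := by
      intro a
      have hra0 := hr0 (a : EuclideanSpace ℝ (Fin n))
      have hra1 := hr1 (a : EuclideanSpace ℝ (Fin n))
      have h5pos : 0 < 5 * r (a : EuclideanSpace ℝ (Fin n)) := by linarith
      have h5le : 5 * r (a : EuclideanSpace ℝ (Fin n)) ≤ 5 := by nlinarith
      have hsb := stmt0_sector_bound hn1 (a : EuclideanSpace ℝ (Fin n)) (hnorm a a.2) h5pos h5le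
      refine hsb.trans (le_of_eq ?_)
      have heq : (11:ℝ) * (2*(5*r (a : EuclideanSpace ℝ (Fin n)))) ^ (n-1)
          = ((11:ℝ) * 10 ^ (n-1)) * (r (a : EuclideanSpace ℝ (Fin n))) ^ (n-1) := by
        rw [show (2:ℝ)*(5*r (a : EuclideanSpace ℝ (Fin n)))
            = 10 * r (a : EuclideanSpace ℝ (Fin n)) by ring, mul_pow]
        ring
      rw [heq, ENNReal.ofReal_mul (by positivity), hK]
      ring
    have hAle : volume A ≤ K * T := by
      calc volume A ≤ volume (⋃ a ∈ u, (A ∩ (fun x : EuclideanSpace ℝ (Fin n) => ‖x‖⁻¹ • x) ⁻¹'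
            closedBall a (5 * r a))) := measure_mono hAcov
        _ ≤ ∑' (a : ↥u), volume (A ∩ (fun x : EuclideanSpace ℝ (Fin n) => ‖x‖⁻¹ • x) ⁻¹'
            closedBall (a : EuclideanSpace ℝ (Fin n)) (5 * r (a : EuclideanSpace ℝ (Fin n)))) :=
            measure_biUnion_le volume hucnt _
        _ ≤ ∑' (a : ↥u), K * ENNReal.ofReal (r (a : EuclideanSpace ℝ (Fin n)) ^ (n-1)) :=
            ENNReal.tsum_le_tsum hsec
        _ = K * T := ENNReal.tsum_mul_left
    have hlow : ENNReal.ofReal ((1/8:ℝ)^n) * Vb ≤ volume A := by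
      have hin : closedBall ((3/4 : ℝ) • p₀) (1/8) ⊆ A := by
        intro y hy
        have hdy : ‖y - (3/4 : ℝ) • p₀‖ ≤ 1/8 := by
          rw [← dist_eq_norm]; exact mem_closedBall.mp hy
        have hnx : ‖((3/4 : ℝ) • p₀ : EuclideanSpace ℝ (Fin n))‖ = 3/4 := by
          rw [norm_smul, hp0, mul_one, Real.norm_eq_abs]
          norm_num
        have habs : |‖y‖ - ‖((3/4 : ℝ) • p₀ : EuclideanSpace ℝ (Fin n))‖|
            ≤ ‖y - (3/4 : ℝ) • p₀‖ := abs_norm_sub_norm_le _ _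
        rw [hnx] at habs
        rw [abs_le] at habs
        constructor
        · exact mem_closedBall_zero_iff.mpr (by linarith [habs.2])
        · intro hmem
          have := mem_ball_zero_iff.mp hmem
          linarith [habs.1]
      calc ENNReal.ofReal ((1/8:ℝ)^n) * Vb
          = volume (closedBall ((3/4:ℝ) • p₀) (1/8)) := by
            rw [Measure.addHaar_closedBall volume _ (by norm_num : (0:ℝ) ≤ 1/8),
              finrank_euclideanSpace_fin, hVb]
        _ ≤ volume A := measure_mono hin
    have hVb0 : Vb ≠ 0 := (measure_ball_pos volume 0 one_pos).ne'
    have hVbtop : Vb ≠ ⊤ := measure_ball_lt_top.ne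
    have hchain : ENNReal.ofReal ((1/8:ℝ)^n) * Vb ≤ K * (ENNReal.ofReal c)⁻¹ :=
      hlow.trans (hAle.trans (mul_le_mul_right hT_le _))
    have hc0' : ENNReal.ofReal c ≠ 0 := (ENNReal.ofReal_pos.mpr hcpos).ne'
    have hctop : ENNReal.ofReal c ≠ ⊤ := ENNReal.ofReal_ne_top
    have h2 : (ENNReal.ofReal ((1/8:ℝ)^n) * ENNReal.ofReal c) * Vb
        ≤ ENNReal.ofReal ((11:ℝ) * 10 ^ (n-1)) * Vb := by
      calc (ENNReal.ofReal ((1/8:ℝ)^n) * ENNReal.ofReal c) * Vb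
          = (ENNReal.ofReal ((1/8:ℝ)^n) * Vb) * ENNReal.ofReal c := by ring
        _ ≤ (K * (ENNReal.ofReal c)⁻¹) * ENNReal.ofReal c := mul_le_mul_left hchain _
        _ = K := by rw [mul_assoc, ENNReal.inv_mul_cancel hc0' hctop, mul_one]
        _ = ENNReal.ofReal ((11:ℝ) * 10 ^ (n-1)) * Vb := hK
    have h3 : ENNReal.ofReal ((1/8:ℝ)^n) * ENNReal.ofReal c
        ≤ ENNReal.ofReal ((11:ℝ) * 10 ^ (n-1)) :=
      (ENNReal.mul_le_mul_iff_left hVb0 hVbtop).mp h2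
    rw [← ENNReal.ofReal_mul (by positivity)] at h3
    have h4 : (1/8:ℝ)^n * c ≤ (11:ℝ) * 10 ^ (n-1) :=
      (ENNReal.ofReal_le_ofReal_iff (by positivity)).mp h3
    have h8 : (0:ℝ) < 8^n := by positivity
    have h18 : ((1:ℝ)/8)^n * 8^n = 1 := by
      rw [← mul_pow]; norm_num
    nlinarith [mul_le_mul_of_nonneg_right h4 h8.le]
end

section
/- Let μ be a finite nonnegative Radon measure on a bounded open set Ω ⊆ ℝⁿ, and let p ∈ Ω satisfy μ(B_r(p)) ≤ C r^d for all small r > 0, where 0 ≤ d < n − α and α ∈ (1, n). Then for x in a small punctured ball around p, the contributions to the Riesz potential from outside a fixed ball and from the region away from the dyadic annulus containing x satisfy: ∫_{Ω \ Ω^δ_i(p)} |x − y|^{α−n} dμ(y) ≤ C' |x − p|^{-(n−α−d)} whenever 2^{-i}δ ≤ |x − p| ≤ 2^{-i+1}δ. -/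
open MeasureTheory Metric Set
open scoped ENNReal

/-- The open dyadic annulus `Ω^δ_i(p) = {y : 2^{-i-1}δ < |y − p| < 2^{-i+2}δ}`. -/
def annO (n : ℕ) (p : EuclideanSpace ℝ (Fin n)) (δ : ℝ) (i : ℕ) :
    Set (EuclideanSpace ℝ (Fin n)) :=
  {y | dist y p ∈ Ioo ((2 : ℝ) ^ (-(i : ℝ) - 1) * δ) ((2 : ℝ) ^ (-(i : ℝ) + 2) * δ)}

private lemma point_bound {n : ℕ} (x y : EuclideanSpace ℝ (Fin n)) {c : ℝ} (s : ℝ)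
    (hc : 0 < c) (h : c ≤ dist x y) (hs : s ≤ 0) :
    edist x y ^ s ≤ ENNReal.ofReal (c ^ s) := by
  rw [edist_dist, ENNReal.ofReal_rpow_of_pos (hc.trans_le h)]
  exact ENNReal.ofReal_le_ofReal (Real.rpow_le_rpow_of_nonpos hc h hs)

private lemma geom_sum_bound (K ρ : ℝ) (hρ0 : 0 ≤ ρ) (hρ1 : ρ < 1) :
    (∑' k : ℕ, ENNReal.ofReal K * (ENNReal.ofReal ρ) ^ k)
      = ENNReal.ofReal (K * (1 - ρ)⁻¹) := by
  rw [ENNReal.tsum_mul_left, ENNReal.tsum_geometric,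
    ENNReal.ofReal_mul' (inv_nonneg.mpr (by linarith)),
    ENNReal.ofReal_inv_of_pos (by linarith), ENNReal.ofReal_sub _ hρ0, ENNReal.ofReal_one]

set_option maxHeartbeats 1000000 in
/-- Let `μ` be a finite nonnegative Radon measure on a bounded open
`Ω ⊆ ℝⁿ`, and `p ∈ Ω` with `μ(B_r(p)) ≤ C r^d` for all small `r > 0`, where
`0 ≤ d < n − α`, `α ∈ (1, n)`. Then, for `x` with `2^{-i}δ ≤ |x − p| ≤ 2^{-i+1}δ` and `i`
large, `∫_{Ω \ Ω^δ_i(p)} |x − y|^{α−n} dμ(y) ≤ C' |x − p|^{-(n−α−d)}`. -/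
theorem stmt11 (n : ℕ) (α d δ C : ℝ) (hα₁ : 1 < α) (hα₂ : α < n) (hd0 : 0 ≤ d)
    (hd : d < n - α) (hδ : 0 < δ) (hC : 0 < C)
    (Ω : Set (EuclideanSpace ℝ (Fin n))) (hΩo : IsOpen Ω) (hΩb : Bornology.IsBounded Ω)
    (p : EuclideanSpace ℝ (Fin n)) (hp : p ∈ Ω)
    (μ : Measure (EuclideanSpace ℝ (Fin n))) [IsFiniteMeasure μ]
    (r₀ : ℝ) (hr₀ : 0 < r₀)
    (hgrowth : ∀ r ∈ Ioc (0 : ℝ) r₀, μ (ball p r) ≤ ENNReal.ofReal (C * r ^ d)) :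
    ∃ C' > (0 : ℝ), ∃ i₀ : ℕ, ∀ i ≥ i₀, ∀ x : EuclideanSpace ℝ (Fin n),
      dist x p ∈ Icc ((2 : ℝ) ^ (-(i : ℝ)) * δ) ((2 : ℝ) ^ (-(i : ℝ) + 1) * δ) →
        (∫⁻ y in Ω \ annO n p δ i, edist x y ^ (α - n) ∂μ)
          ≤ ENNReal.ofReal (C' * dist x p ^ (α + d - n)) := by
  have hsneg : α - n < 0 := by linarith
  set ρ : ℝ := (2 : ℝ) ^ (α + d - n) with hρdef
  have hρ0 : 0 < ρ := Real.rpow_pos_of_pos two_pos _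
  have hρ1 : ρ < 1 := Real.rpow_lt_one_of_one_lt_of_neg one_lt_two (by linarith)
  -- global growth constant
  set M : ℝ := (μ Set.univ).toReal with hM
  have hM0 : 0 ≤ M := ENNReal.toReal_nonneg
  have hr₀d : 0 < r₀ ^ d := Real.rpow_pos_of_pos hr₀ d
  set C₁ : ℝ := C + M / r₀ ^ d with hC₁
  have hC₁0 : 0 < C₁ := by positivity
  have hg : ∀ r : ℝ, 0 < r → μ (ball p r) ≤ ENNReal.ofReal (C₁ * r ^ d) := by
    intro r hr
    have hrd : 0 < r ^ d := Real.rpow_pos_of_pos hr d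
    rcases le_or_gt r r₀ with h | h
    · refine (hgrowth r ⟨hr, h⟩).trans (ENNReal.ofReal_le_ofReal ?_)
      have h2 : 0 ≤ M / r₀ ^ d := by positivity
      have h6 := mul_nonneg h2 hrd.le
      rw [hC₁, add_mul]
      linarith
    · have h1 : μ (ball p r) ≤ ENNReal.ofReal M := by
        rw [hM, ENNReal.ofReal_toReal (measure_ne_top μ _)]
        exact measure_mono (subset_univ _)
      refine h1.trans (ENNReal.ofReal_le_ofReal ?_)
      have h2 : r₀ ^ d ≤ r ^ d := Real.rpow_le_rpow hr₀.le h.le hd0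
      have h3 : M = M / r₀ ^ d * r₀ ^ d := by field_simp
      have h4 := mul_le_mul_of_nonneg_left h2 (div_nonneg hM0 hr₀d.le)
      have h5 : 0 ≤ C * r ^ d := by positivity
      rw [hC₁, add_mul]
      linarith
  have h2na : (0:ℝ) < 2 ^ (n - α) := Real.rpow_pos_of_pos two_pos _
  have h8d : (0:ℝ) < 8 ^ d := Real.rpow_pos_of_pos (by norm_num) d
  have hinvρ : (0:ℝ) < (1 - ρ)⁻¹ := inv_pos.mpr (by linarith)
  refine ⟨C₁ * 2 ^ (n - α) + C₁ * 8 ^ d * (1 - ρ)⁻¹, by positivity, 0, ?_⟩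
  intro i _ x hx
  set b : ℝ := (2 : ℝ) ^ (-(i : ℝ)) * δ with hb
  have hb0 : 0 < b := by positivity
  have e1 : (2 : ℝ) ^ (-(i : ℝ) - 1) * δ = b / 2 := by
    rw [hb, Real.rpow_sub two_pos, Real.rpow_one]; ring
  have e2 : (2 : ℝ) ^ (-(i : ℝ) + 1) * δ = 2 * b := by
    rw [hb, Real.rpow_add two_pos, Real.rpow_one]; ring
  have h4 : ((2:ℝ) ^ (2:ℝ)) = 4 := by
    rw [show (2:ℝ) = ((2:ℕ):ℝ) from by norm_num, Real.rpow_natCast]; norm_num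
  have e4 : (2 : ℝ) ^ (-(i : ℝ) + 2) * δ = 4 * b := by
    rw [hb, Real.rpow_add two_pos, h4]; ring
  obtain ⟨hxl, hxr⟩ := hx
  rw [e2] at hxr
  have hR0 : 0 < dist x p := lt_of_lt_of_le hb0 hxl
  set R : ℝ := dist x p with hRdef
  set T : ℝ := 4 * b with hT
  have hT0 : 0 < T := by positivity
  -- the covering family
  set s : ℕ → Set (EuclideanSpace ℝ (Fin n)) := fun k =>
    Nat.rec (closedBall p (b / 2))
      (fun k _ => {y | dist y p ∈ Ico ((2:ℝ) ^ k * T) ((2:ℝ) ^ (k+1) * T)}) k with hsdef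
  have hs0 : s 0 = closedBall p (b / 2) := rfl
  have hsk : ∀ k : ℕ, s (k+1) = {y | dist y p ∈ Ico ((2:ℝ) ^ k * T) ((2:ℝ) ^ (k+1) * T)} :=
    fun k => rfl
  have hsub : Ω \ annO n p δ i ⊆ ⋃ k, s k := by
    rintro y ⟨-, hy⟩
    simp only [annO, mem_setOf_eq, mem_Ioo, not_and, not_lt] at hy
    rw [e1, e4] at hy
    rcases le_or_gt (dist y p) (b / 2) with h | h
    · exact mem_iUnion.2 ⟨0, by rw [hs0]; exact mem_closedBall.2 h⟩
    · have hTle : T ≤ dist y p := by rw [hT]; exact hy h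
      have hq1 : (1:ℝ) ≤ dist y p / T := (one_le_div hT0).2 hTle
      obtain ⟨m, hm1, hm2⟩ :=
        exists_mem_Ico_zpow (x := dist y p / T) (y := (2:ℝ)) (by linarith) one_lt_two
      have hm0 : 0 ≤ m := by
        by_contra hneg
        push_neg at hneg
        have hle : (2:ℝ) ^ (m+1) ≤ 1 := zpow_le_one_of_nonpos₀ one_le_two (by omega)
        have := hm2.trans_le hle
        linarith
      have hz : ((2:ℝ) ^ m.toNat : ℝ) = (2:ℝ) ^ m := by
        rw [← zpow_natCast, Int.toNat_of_nonneg hm0]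
      have hz' : ((2:ℝ) ^ (m.toNat + 1) : ℝ) = (2:ℝ) ^ (m + 1) := by
        rw [← zpow_natCast, show ((m.toNat + 1 : ℕ) : ℤ) = m + 1 by omega]
      refine mem_iUnion.2 ⟨m.toNat + 1, ?_⟩
      rw [hsk]
      refine ⟨?_, ?_⟩
      · rw [hz]
        exact (le_div_iff₀ hT0).1 hm1
      · rw [hz']
        exact (div_lt_iff₀ hT0).1 hm2
  -- generic bound on a piece
  have hbound : ∀ (u : Set (EuclideanSpace ℝ (Fin n))) (c r : ℝ), 0 < c → 0 < r →
      (∀ y ∈ u, c ≤ dist x y) → u ⊆ ball p r →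
      (∫⁻ y in u, edist x y ^ (α - n) ∂μ) ≤ ENNReal.ofReal (c ^ (α - n) * (C₁ * r ^ d)) := by
    intro u c r hc hr hcy hur
    calc (∫⁻ y in u, edist x y ^ (α - n) ∂μ)
        ≤ ∫⁻ _ in u, ENNReal.ofReal (c ^ (α - n)) ∂μ :=
          setLIntegral_mono measurable_const
            (fun y hy => point_bound x y (α - n) hc (hcy y hy) hsneg.le)
      _ = ENNReal.ofReal (c ^ (α - n)) * μ u := setLIntegral_const _ _
      _ ≤ ENNReal.ofReal (c ^ (α - n)) * ENNReal.ofReal (C₁ * r ^ d) :=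
          mul_le_mul_right ((measure_mono hur).trans (hg r hr)) _
      _ = ENNReal.ofReal (c ^ (α - n) * (C₁ * r ^ d)) :=
          (ENNReal.ofReal_mul (Real.rpow_nonneg hc.le _)).symm
  -- bound for the central piece
  have hI0 : (∫⁻ y in s 0, edist x y ^ (α - n) ∂μ)
      ≤ ENNReal.ofReal ((R / 2) ^ (α - n) * (C₁ * b ^ d)) := by
    rw [hs0]
    refine hbound _ (R / 2) b (by positivity) hb0 ?_ ?_
    · intro y hy
      have h1 : dist y p ≤ b / 2 := mem_closedBall.1 hy
      have h2 : dist x p ≤ dist x y + dist y p := dist_triangle x y p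
      have : b ≤ R := hxl
      linarith
    · intro y hy
      have h1 : dist y p ≤ b / 2 := mem_closedBall.1 hy
      exact mem_ball.2 (by linarith)
  -- bound for the annular pieces
  set K : ℝ := (T / 2) ^ (α - n) * (C₁ * (2 * T) ^ d) with hK
  have hIk : ∀ k : ℕ, (∫⁻ y in s (k+1), edist x y ^ (α - n) ∂μ)
      ≤ ENNReal.ofReal K * (ENNReal.ofReal ρ) ^ k := by
    intro k
    have hP : (0:ℝ) < (2:ℝ) ^ k := by positivity
    have hstep : (∫⁻ y in s (k+1), edist x y ^ (α - n) ∂μ)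
        ≤ ENNReal.ofReal (((2:ℝ) ^ k * T / 2) ^ (α - n) * (C₁ * ((2:ℝ) ^ (k+1) * T) ^ d)) := by
      rw [hsk]
      refine hbound _ ((2:ℝ) ^ k * T / 2) ((2:ℝ) ^ (k+1) * T) (by positivity) (by positivity)
        ?_ ?_
      · intro y hy
        have h1 : (2:ℝ) ^ k * T ≤ dist y p := hy.1
        have h2 : dist y p ≤ dist y x + dist x p := dist_triangle y x p
        have h3 : R ≤ 2 * b := hxr
        have h4 : T ≤ (2:ℝ) ^ k * T := le_mul_of_one_le_left hT0.le (one_le_pow₀ one_le_two)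
        have h5 : dist y x = dist x y := dist_comm y x
        have : 2 * b = T / 2 := by rw [hT]; ring
        nlinarith
      · intro y hy
        exact mem_ball.2 hy.2
    refine hstep.trans (le_of_eq ?_)
    have hPρ : ((2:ℝ) ^ k : ℝ) ^ (α + d - n) = ρ ^ k := by
      rw [← Real.rpow_natCast (2:ℝ) k, ← Real.rpow_mul two_pos.le, hρdef,
        ← Real.rpow_natCast ((2:ℝ) ^ (α + d - n)) k, ← Real.rpow_mul two_pos.le, mul_comm]
    have hreal : ((2:ℝ) ^ k * T / 2) ^ (α - n) * (C₁ * ((2:ℝ) ^ (k+1) * T) ^ d)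
        = K * ρ ^ k := by
      have e5 : (2:ℝ) ^ k * T / 2 = (2:ℝ) ^ k * (T / 2) := by ring
      have e6 : (2:ℝ) ^ (k+1) * T = (2:ℝ) ^ k * (2 * T) := by rw [pow_succ]; ring
      rw [e5, e6, Real.mul_rpow hP.le (by positivity), Real.mul_rpow hP.le (by positivity),
        ← hPρ, show α + d - n = (α - n) + d by ring, Real.rpow_add hP]
      ring
    rw [hreal, ENNReal.ofReal_mul' (pow_nonneg hρ0.le k), ENNReal.ofReal_pow hρ0.le]
  -- assemble
  have hRd : b ^ d ≤ R ^ d := Real.rpow_le_rpow hb0.le hxl hd0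
  have hRn : R ^ (α - n) * R ^ d = R ^ (α + d - n) := by
    rw [← Real.rpow_add hR0]; ring_nf
  have hhalf : (R / 2) ^ (α - n) = 2 ^ (n - α) * R ^ (α - n) := by
    rw [div_eq_mul_inv, Real.mul_rpow hR0.le (by positivity), ← Real.rpow_neg_one (2:ℝ),
      ← Real.rpow_mul two_pos.le]
    ring_nf
  have hA : (R / 2) ^ (α - n) * (C₁ * b ^ d) ≤ C₁ * 2 ^ (n - α) * R ^ (α + d - n) := by
    rw [hhalf, ← hRn]
    have h0 : (0:ℝ) ≤ 2 ^ (n - α) * R ^ (α - n) * C₁ :=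
      by positivity
    nlinarith [mul_le_mul_of_nonneg_left hRd h0, Real.rpow_pos_of_pos hR0 (α - n)]
  have hKb : K ≤ C₁ * 8 ^ d * R ^ (α + d - n) := by
    have h1 : (T / 2) ^ (α - n) ≤ R ^ (α - n) := by
      refine Real.rpow_le_rpow_of_nonpos hR0 ?_ hsneg.le
      rw [hT]; linarith
    have h2 : (2 * T) ^ d ≤ 8 ^ d * R ^ d := by
      rw [← Real.mul_rpow (by norm_num) hR0.le]
      refine Real.rpow_le_rpow (by positivity) ?_ hd0
      rw [hT]; linarith
    have hRa : (0:ℝ) < R ^ (α - n) := Real.rpow_pos_of_pos hR0 _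
    have h2T : (0:ℝ) ≤ (2 * T) ^ d := Real.rpow_nonneg (by positivity) _
    rw [hK, ← hRn]
    calc (T / 2) ^ (α - n) * (C₁ * (2 * T) ^ d)
        ≤ R ^ (α - n) * (C₁ * (8 ^ d * R ^ d)) :=
          mul_le_mul h1 (mul_le_mul_of_nonneg_left h2 hC₁0.le) (by positivity) hRa.le
      _ = C₁ * 8 ^ d * (R ^ (α - n) * R ^ d) := by ring
  set F : ℕ → ℝ≥0∞ := fun k => ∫⁻ y in s k, edist x y ^ (α - n) ∂μ with hF
  have hsplit : (∑' k, F k) = F 0 + ∑' k, F (k+1) := tsum_eq_zero_add' ENNReal.summable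
  calc (∫⁻ y in Ω \ annO n p δ i, edist x y ^ (α - n) ∂μ)
      ≤ ∫⁻ y in ⋃ k, s k, edist x y ^ (α - n) ∂μ := lintegral_mono_set hsub
    _ ≤ ∑' k, F k := lintegral_iUnion_le _ _
    _ = F 0 + ∑' k, F (k+1) := hsplit
    _ ≤ ENNReal.ofReal ((R / 2) ^ (α - n) * (C₁ * b ^ d))
        + ∑' k : ℕ, ENNReal.ofReal K * (ENNReal.ofReal ρ) ^ k :=
          add_le_add hI0 (ENNReal.tsum_le_tsum hIk)
    _ = ENNReal.ofReal ((R / 2) ^ (α - n) * (C₁ * b ^ d))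
        + ENNReal.ofReal (K * (1 - ρ)⁻¹) := by rw [geom_sum_bound K ρ hρ0.le hρ1]
    _ ≤ ENNReal.ofReal (C₁ * 2 ^ (n - α) * R ^ (α + d - n))
        + ENNReal.ofReal (C₁ * 8 ^ d * (1 - ρ)⁻¹ * R ^ (α + d - n)) := by
          refine add_le_add (ENNReal.ofReal_le_ofReal hA) (ENNReal.ofReal_le_ofReal ?_)
          calc K * (1 - ρ)⁻¹ ≤ C₁ * 8 ^ d * R ^ (α + d - n) * (1 - ρ)⁻¹ :=
                mul_le_mul_of_nonneg_right hKb hinvρ.le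
            _ = C₁ * 8 ^ d * (1 - ρ)⁻¹ * R ^ (α + d - n) := by ring
    _ = ENNReal.ofReal ((C₁ * 2 ^ (n - α) + C₁ * 8 ^ d * (1 - ρ)⁻¹) * R ^ (α + d - n)) := by
          rw [← ENNReal.ofReal_add (by positivity) (by positivity)]
          congr 1
          ring
end
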